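/- Convergence to the unique equilibrium of a dissipative mechanical system: let U : ℝⁿ → ℝ be continuously differentiable with locally Lipschitz gradient ∇U, and suppose ∇U(p) = 0 holds for exactly one point p = q_min. Let F : ℝⁿ × ℝⁿ → ℝⁿ be locally Lipschitz with ⟨F(p, v), v⟩ < 0 for all p ∈ ℝⁿ and all v ≠ 0, and F(p, 0) = 0 for all p. Let q : [0,∞) → ℝⁿ be twice differentiable with q̈(t) = −∇U(q(t)) + F(q(t), q̇(t)) for all t ≥ 0, and suppose the forward orbit {(q(t), q̇(t)) : t ≥ 0} is precompact in ℝⁿ × ℝⁿ. Then (q(t), q̇(t)) → (q_min, 0) as t → ∞. -/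

import Mathlib

set_option maxHeartbeats 1000000


open RealInnerProductSpace Filter Topology

lemma aux_antitoneOn {f f' : ℝ → ℝ} {s : Set ℝ} (hs : Convex ℝ s) (hsub : s ⊆ Set.Ici 0)
    (hf : ∀ t : ℝ, 0 ≤ t → HasDerivWithinAt f (f' t) (Set.Ici 0) t)
    (h0 : ∀ t ∈ interior s, f' t ≤ 0) : AntitoneOn f s := by
  have hint : ∀ t ∈ interior s, HasDerivAt f (f' t) t := by
    intro t ht
    have ht' : t ∈ interior (Set.Ici (0:ℝ)) := interior_mono hsub ht
    rw [interior_Ici] at ht'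
    exact (hf t (le_of_lt ht')).hasDerivAt (Ici_mem_nhds ht')
  refine antitoneOn_of_deriv_nonpos hs ?_ ?_ ?_
  · exact fun t ht => ((hf t (hsub ht)).continuousWithinAt).mono hsub
  · exact fun t ht => (hint t ht).differentiableAt.differentiableWithinAt
  · intro t ht
    rw [(hint t ht).deriv]
    exact h0 t ht

/-- Convergence to the unique equilibrium of a dissipative mechanical system: if
`U` is `C¹` with locally Lipschitz gradient and `q_min` is the unique critical
point of `U`, `F` is locally Lipschitz with `⟨F(p,v), v⟩ < 0` for `v ≠ 0` and
`F(p,0) = 0`, and `q : [0,∞) → ℝⁿ` is a twice differentiable solution of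
`q̈ = −∇U(q) + F(q, q̇)` with precompact forward orbit, then
`(q(t), q̇(t)) → (q_min, 0)` as `t → ∞`. -/
theorem tendsto_unique_equilibrium
    {n : ℕ}
    (U : EuclideanSpace ℝ (Fin n) → ℝ)
    (hU : ContDiff ℝ 1 U) (hgradLip : LocallyLipschitz (gradient U))
    (qmin : EuclideanSpace ℝ (Fin n))
    (hcrit : ∀ p : EuclideanSpace ℝ (Fin n), gradient U p = 0 ↔ p = qmin)
    (F : EuclideanSpace ℝ (Fin n) → EuclideanSpace ℝ (Fin n) → EuclideanSpace ℝ (Fin n))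
    (hFLip : LocallyLipschitz
      (fun p : EuclideanSpace ℝ (Fin n) × EuclideanSpace ℝ (Fin n) => F p.1 p.2))
    (hFdiss : ∀ (p v : EuclideanSpace ℝ (Fin n)), v ≠ 0 → ⟪F p v, v⟫ < 0)
    (hF0 : ∀ p : EuclideanSpace ℝ (Fin n), F p 0 = 0)
    (q q' q'' : ℝ → EuclideanSpace ℝ (Fin n))
    (hq : ∀ t : ℝ, 0 ≤ t → HasDerivWithinAt q (q' t) (Set.Ici 0) t)
    (hq' : ∀ t : ℝ, 0 ≤ t → HasDerivWithinAt q' (q'' t) (Set.Ici 0) t)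
    (heq : ∀ t : ℝ, 0 ≤ t → q'' t = -gradient U (q t) + F (q t) (q' t))
    (hpre : IsCompact (closure ((fun t => (q t, q' t)) '' Set.Ici (0 : ℝ)))) :
    Tendsto (fun t => (q t, q' t)) atTop (𝓝 (qmin, 0)) := by
  have _dummy : True := trivial
  set K : Set (EuclideanSpace ℝ (Fin n) × EuclideanSpace ℝ (Fin n)) := closure ((fun t => (q t, q' t)) '' Set.Ici (0 : ℝ)) with hKdef
  have hmemK : ∀ t : ℝ, 0 ≤ t → (q t, q' t) ∈ K := fun t ht =>
    subset_closure ⟨t, ht, rfl⟩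
  have hK1 : IsCompact (Prod.fst '' K) := hpre.image continuous_fst
  have hmemK1 : ∀ t : ℝ, 0 ≤ t → q t ∈ Prod.fst '' K := fun t ht =>
    ⟨(q t, q' t), hmemK t ht, rfl⟩
  have hgradcont : Continuous (gradient U) := hgradLip.continuous
  have hFcont : Continuous (fun x : EuclideanSpace ℝ (Fin n) × EuclideanSpace ℝ (Fin n) => F x.1 x.2) := hFLip.continuous
  -- bounds
  obtain ⟨M₁, hM₁⟩ : ∃ M₁ : ℝ, ∀ x ∈ K, ‖gradient U x.1‖ ≤ M₁ :=
    hpre.exists_bound_of_continuousOn ((hgradcont.comp continuous_fst).continuousOn)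
  obtain ⟨M₃, hM₃⟩ : ∃ M₃ : ℝ, ∀ x ∈ K, ‖F x.1 x.2‖ ≤ M₃ :=
    hpre.exists_bound_of_continuousOn hFcont.continuousOn
  obtain ⟨M₂0, hM₂0⟩ : ∃ M₂ : ℝ, ∀ x ∈ K, ‖x.2‖ ≤ M₂ :=
    hpre.exists_bound_of_continuousOn continuous_snd.continuousOn
  set M₂ : ℝ := max M₂0 0 + 1 with hM₂def
  have hM₂pos : 0 < M₂ := by positivity
  have hq'bdd : ∀ t : ℝ, 0 ≤ t → ‖q' t‖ ≤ M₂ := by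
    intro t ht
    have h1 := hM₂0 (q t, q' t) (hmemK t ht)
    simp only at h1
    have h5 : max M₂0 0 + 1 = M₂ := hM₂def.symm
    linarith [le_max_left M₂0 (0:ℝ)]
  set M : ℝ := max (M₁ + M₃) 0 + 1 with hMdef
  have hMpos : 0 < M := by positivity
  have hq''bdd : ∀ t : ℝ, 0 ≤ t → ‖q'' t‖ ≤ M := by
    intro t ht
    rw [heq t ht]
    have h1 := hM₁ (q t, q' t) (hmemK t ht)
    have h3 := hM₃ (q t, q' t) (hmemK t ht)
    simp only at h1 h3
    have h4 := norm_add_le (-gradient U (q t)) (F (q t) (q' t))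
    rw [norm_neg] at h4
    have h5 : max (M₁ + M₃) 0 + 1 = M := hMdef.symm
    linarith [le_max_left (M₁ + M₃) (0:ℝ)]
  -- Lipschitz estimates
  have hqLip : ∀ s t : ℝ, 0 ≤ s → 0 ≤ t → ‖q t - q s‖ ≤ M₂ * ‖t - s‖ := by
    intro s t hs ht
    exact Convex.norm_image_sub_le_of_norm_hasDerivWithin_le
      (fun x hx => hq x hx) (fun x hx => hq'bdd x hx) (convex_Ici 0) hs ht
  have hq'Lip : ∀ s t : ℝ, 0 ≤ s → 0 ≤ t → ‖q' t - q' s‖ ≤ M * ‖t - s‖ := by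
    intro s t hs ht
    exact Convex.norm_image_sub_le_of_norm_hasDerivWithin_le
      (fun x hx => hq' x hx) (fun x hx => hq''bdd x hx) (convex_Ici 0) hs ht
  -- energy
  set Ee : ℝ → ℝ := fun t => U (q t) + ⟪q' t, q' t⟫ / 2 with hEedef
  set D : ℝ → ℝ := fun t => ⟪F (q t) (q' t), q' t⟫ with hDdef
  have hEderiv : ∀ t : ℝ, 0 ≤ t → HasDerivWithinAt Ee (D t) (Set.Ici 0) t := by
    intro t ht
    have h1 : HasDerivWithinAt (fun s => U (q s)) ⟪gradient U (q t), q' t⟫ (Set.Ici 0) t := by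
      have hg := ((hU.differentiable one_ne_zero) (q t)).hasFDerivAt
      have := hg.comp_hasDerivWithinAt t (hq t ht)
      exact this.congr_deriv (by rw [gradient, InnerProductSpace.toDual_symm_apply])
    have h2 : HasDerivWithinAt (fun s => ⟪q' s, q' s⟫ / 2)
        ((⟪q' t, q'' t⟫ + ⟪q'' t, q' t⟫) / 2) (Set.Ici 0) t :=
      ((hq' t ht).inner ℝ (hq' t ht)).div_const 2
    have := h1.add h2
    convert this using 1
    show (⟪F (q t) (q' t), q' t⟫ : ℝ) = _
    rw [heq t ht]
    simp only [inner_add_right, inner_neg_right, inner_add_left, inner_neg_left]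
    rw [real_inner_comm (F (q t) (q' t)) (q' t), real_inner_comm (gradient U (q t)) (q' t)]
    ring
    all_goals rfl
  have hDnonpos : ∀ t : ℝ, 0 ≤ t → D t ≤ 0 := by
    intro t ht
    rcases eq_or_ne (q' t) 0 with h | h
    · simp [hDdef, h]
    · exact (hFdiss _ _ h).le
  have hEanti : AntitoneOn Ee (Set.Ici 0) :=
    aux_antitoneOn (convex_Ici 0) (fun x hx => hx) hEderiv
      (fun t ht => hDnonpos t (le_of_lt (by rwa [interior_Ici] at ht)))
  obtain ⟨B, hB⟩ : ∃ B : ℝ, ∀ t : ℝ, 0 ≤ t → B ≤ Ee t := by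
    obtain ⟨C, hC⟩ := hK1.exists_bound_of_continuousOn hU.continuous.continuousOn
    refine ⟨-C, fun t ht => ?_⟩
    have h1 := hC (q t) (hmemK1 t ht)
    have h2 : (0:ℝ) ≤ ⟪q' t, q' t⟫ := real_inner_self_nonneg
    rw [Real.norm_eq_abs] at h1
    show -C ≤ U (q t) + ⟪q' t, q' t⟫ / 2
    have := abs_le.mp h1
    linarith [this.1]
  set L : ℝ := ⨅ s : ℝ, Ee (max s 0) with hLdef
  have hE0anti : Antitone (fun s : ℝ => Ee (max s 0)) := fun a b hab =>
    hEanti (Set.mem_Ici.2 (le_max_right a 0)) (Set.mem_Ici.2 (le_max_right b 0))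
      (max_le_max hab le_rfl)
  have hE0bdd : BddBelow (Set.range fun s : ℝ => Ee (max s 0)) := by
    refine ⟨B, ?_⟩
    rintro x ⟨s, rfl⟩
    exact hB _ (le_max_right s 0)
  have hEtend : Tendsto Ee atTop (𝓝 L) := by
    have h1 : Tendsto (fun s : ℝ => Ee (max s 0)) atTop (𝓝 L) :=
      tendsto_atTop_ciInf hE0anti hE0bdd
    refine h1.congr' ?_
    filter_upwards [eventually_ge_atTop (0:ℝ)] with t ht
    rw [max_eq_left ht]
  -- Claim A : q' tends to 0
  have hq'0 : Tendsto q' atTop (𝓝 (0 : EuclideanSpace ℝ (Fin n))) := by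
    rw [Metric.tendsto_atTop]
    by_contra hcon
    push_neg at hcon
    obtain ⟨ε, hε, hfreq⟩ := hcon
    choose u hu1 hu2 using fun N : ℕ => hfreq (max (N : ℝ) 1)
    have hu0 : ∀ m : ℕ, (1:ℝ) ≤ u m := fun m => le_trans (le_max_right _ 1) (hu1 m)
    have hunn : ∀ m : ℕ, (0:ℝ) ≤ u m := fun m => le_trans zero_le_one (hu0 m)
    have hunorm : ∀ m : ℕ, ε ≤ ‖q' (u m)‖ := by
      intro m; have := hu2 m; rwa [dist_zero_right] at this
    -- minimum dissipation rate on the compact set where ‖v‖ ≥ ε/2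
    set S : Set (EuclideanSpace ℝ (Fin n) × EuclideanSpace ℝ (Fin n)) :=
      K ∩ {x | ε/2 ≤ ‖x.2‖} with hSdef
    have hScomp : IsCompact S :=
      hpre.inter_right (isClosed_le continuous_const continuous_snd.norm)
    have hSne : S.Nonempty := by
      refine ⟨(q (u 0), q' (u 0)), hmemK _ (hunn 0), ?_⟩
      simp only [Set.mem_setOf_eq]
      have := hunorm 0
      linarith
    obtain ⟨x₀, hx₀S, hx₀max⟩ := hScomp.exists_isMaxOn hSne
      ((Continuous.inner (𝕜 := ℝ) hFcont continuous_snd).continuousOn)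
    set δ : ℝ := -⟪F x₀.1 x₀.2, x₀.2⟫ with hδdef
    have hx₀ne : x₀.2 ≠ 0 := by
      intro h
      have h2 := hx₀S.2
      simp only [Set.mem_setOf_eq, h, norm_zero] at h2
      linarith
    have hδpos : 0 < δ := by
      have := hFdiss x₀.1 x₀.2 hx₀ne
      simp only [hδdef]; linarith
    have hDle : ∀ t : ℝ, 0 ≤ t → ε/2 ≤ ‖q' t‖ → D t ≤ -δ := by
      intro t ht h
      have hmem : (q t, q' t) ∈ S := ⟨hmemK t ht, h⟩
      have h6 := hx₀max hmem
      simp only [Set.mem_setOf_eq] at h6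
      simp only [hδdef, neg_neg]
      exact h6
    set τ : ℝ := ε / (2 * M) with hτdef
    have hτpos : 0 < τ := by positivity
    have hMτ : M * τ = ε / 2 := by
      rw [hτdef]; field_simp
    have hhalf : ∀ m : ℕ, ∀ t ∈ Set.Icc (u m) (u m + τ), ε/2 ≤ ‖q' t‖ := by
      intro m t ⟨h1, h2⟩
      have ht0 : 0 ≤ t := le_trans (hunn m) h1
      have hlip := hq'Lip (u m) t (hunn m) ht0
      have habs : ‖t - u m‖ ≤ τ := by
        rw [Real.norm_eq_abs, abs_of_nonneg (by linarith)]
        linarith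
      have h3 : ‖q' t - q' (u m)‖ ≤ ε / 2 := by
        calc ‖q' t - q' (u m)‖ ≤ M * ‖t - u m‖ := hlip
          _ ≤ M * τ := by nlinarith
          _ = ε / 2 := hMτ
      have h4 : ‖q' (u m)‖ - ‖q' t‖ ≤ ‖q' t - q' (u m)‖ := by
        rw [norm_sub_rev]
        exact norm_sub_norm_le _ _
      linarith [hunorm m]
    have hstep : ∀ m : ℕ, Ee (u m + τ) ≤ Ee (u m) - δ * τ := by
      intro m
      have hgderiv : ∀ t : ℝ, 0 ≤ t →
          HasDerivWithinAt (fun s => Ee s + δ * s) (D t + δ) (Set.Ici 0) t := by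
        intro t ht
        have h2 : HasDerivAt (fun s : ℝ => δ * s) δ t := by
          simpa using (hasDerivAt_id t).const_mul δ
        exact (hEderiv t ht).add h2.hasDerivWithinAt
      have hsub : Set.Icc (u m) (u m + τ) ⊆ Set.Ici (0:ℝ) := by
        intro x hx
        exact le_trans (hunn m) hx.1
      have hanti := aux_antitoneOn (convex_Icc (u m) (u m + τ)) hsub hgderiv ?_
      · have h5 := hanti (Set.left_mem_Icc.2 (by linarith)) (Set.right_mem_Icc.2 (by linarith))
          (by linarith)
        simp only at h5
        linarith
      · intro t ht
        rw [interior_Icc] at ht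
        have ht' : t ∈ Set.Icc (u m) (u m + τ) := Set.Ioo_subset_Icc_self ht
        have := hDle t (hsub ht') (hhalf m t ht')
        linarith
    have hutend : Tendsto u atTop atTop := by
      apply tendsto_atTop_mono (fun m : ℕ => le_trans (le_max_left (m:ℝ) 1) (hu1 m))
      exact tendsto_natCast_atTop_atTop
    have h1 : Tendsto (fun m => Ee (u m)) atTop (𝓝 L) := hEtend.comp hutend
    have h2 : Tendsto (fun m => Ee (u m + τ)) atTop (𝓝 L) :=
      hEtend.comp (tendsto_atTop_add_const_right _ τ hutend)
    have hle := le_of_tendsto_of_tendsto' h2 (h1.sub_const (δ * τ)) hstep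
    nlinarith
  -- Claim B : gradient along the trajectory tends to 0
  have hgrad0 : Tendsto (fun t => gradient U (q t)) atTop
      (𝓝 (0 : EuclideanSpace ℝ (Fin n))) := by
    rw [Metric.tendsto_atTop]
    by_contra hcon
    push_neg at hcon
    obtain ⟨ε, hε, hfreq⟩ := hcon
    have hucg := hK1.uniformContinuousOn_of_continuous hgradcont.continuousOn
    rw [Metric.uniformContinuousOn_iff] at hucg
    obtain ⟨η, hηpos, hη⟩ := hucg (ε/4) (by positivity)
    set K' : Set (EuclideanSpace ℝ (Fin n) × EuclideanSpace ℝ (Fin n)) :=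
      K ∪ (Prod.fst '' K) ×ˢ ({0} : Set (EuclideanSpace ℝ (Fin n))) with hK'def
    have hK'comp : IsCompact K' := hpre.union (hK1.prod isCompact_singleton)
    have hucF := hK'comp.uniformContinuousOn_of_continuous hFcont.continuousOn
    rw [Metric.uniformContinuousOn_iff] at hucF
    obtain ⟨η₂, hη₂pos, hη₂⟩ := hucF (ε/4) (by positivity)
    set τ : ℝ := min (η / (2 * M₂)) 1 with hτdef
    have hτpos : 0 < τ := lt_min (by positivity) one_pos
    obtain ⟨T, hT⟩ := (Metric.tendsto_atTop.1 hq'0) (min η₂ (ε * τ / 8)) (by positivity)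
    obtain ⟨t₀, ht₀ge, ht₀⟩ := hfreq (max T 1)
    have ht₀1 : (1:ℝ) ≤ t₀ := le_trans (le_max_right T 1) ht₀ge
    have ht₀0 : (0:ℝ) ≤ t₀ := by linarith
    have ht₀T : T ≤ t₀ := le_trans (le_max_left T 1) ht₀ge
    rw [dist_zero_right] at ht₀
    set g₀ := gradient U (q t₀) with hg₀def
    have hg₀pos : 0 < ‖g₀‖ := lt_of_lt_of_le hε ht₀
    set uvec := (‖g₀‖)⁻¹ • (-g₀) with huvecdef
    have huvecnorm : ‖uvec‖ = 1 := by
      rw [huvecdef, norm_smul, norm_inv, norm_norm, norm_neg]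
      field_simp
    have hq'small : ∀ t : ℝ, T ≤ t → ‖q' t‖ < min η₂ (ε * τ / 8) := by
      intro t htT
      have := hT t htT
      rwa [dist_zero_right] at this
    have hkey : ∀ t ∈ Set.Icc t₀ (t₀ + τ), ε/2 ≤ ⟪q'' t, uvec⟫ := by
      intro t hmemt
      obtain ⟨h1, h2⟩ := hmemt
      have ht0 : (0:ℝ) ≤ t := by linarith
      have htT : T ≤ t := by linarith
      have hqclose : dist (q t) (q t₀) < η := by
        have hlip := hqLip t₀ t ht₀0 ht0
        rw [dist_eq_norm]
        have habs : ‖t - t₀‖ ≤ τ := by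
          rw [Real.norm_eq_abs, abs_of_nonneg (by linarith)]
          linarith
        have hτη : M₂ * τ ≤ η / 2 := by
          have hmin : τ ≤ η / (2 * M₂) := min_le_left _ _
          have : M₂ * τ ≤ M₂ * (η / (2*M₂)) := by nlinarith
          calc M₂ * τ ≤ M₂ * (η / (2*M₂)) := this
            _ = η / 2 := by field_simp
        calc ‖q t - q t₀‖ ≤ M₂ * ‖t - t₀‖ := hlip
          _ ≤ M₂ * τ := by nlinarith
          _ ≤ η/2 := hτη
          _ < η := by linarith
      have hgradclose : ‖gradient U (q t) - g₀‖ < ε/4 := by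
        have := hη (q t) (hmemK1 t ht0) (q t₀) (hmemK1 t₀ ht₀0) hqclose
        rwa [dist_eq_norm] at this
      have hFsmall : ‖F (q t) (q' t)‖ < ε/4 := by
        have hq's := lt_of_lt_of_le (hq'small t htT) (min_le_left _ _)
        have hd : dist ((q t, q' t) : EuclideanSpace ℝ (Fin n) × EuclideanSpace ℝ (Fin n))
            ((q t, 0)) < η₂ := by
          rw [Prod.dist_eq]
          simp only [dist_self, dist_zero_right]
          rw [max_eq_right (norm_nonneg _)]
          exact hq's
        have h8 := hη₂ (q t, q' t) (Or.inl (hmemK t ht0)) (q t, 0)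
          (Or.inr ⟨⟨(q t, q' t), hmemK t ht0, rfl⟩, rfl⟩) hd
        simp only at h8
        rw [hF0 (q t), dist_zero_right] at h8
        exact h8
      have hexp : ⟪q'' t, uvec⟫ =
          ⟪-g₀, uvec⟫ + ⟪g₀ - gradient U (q t), uvec⟫ + ⟪F (q t) (q' t), uvec⟫ := by
        rw [heq t ht0, ← inner_add_left, ← inner_add_left]
        congr 1
        module
      have h5 : ⟪-g₀, uvec⟫ = ‖g₀‖ := by
        rw [huvecdef, real_inner_smul_right, inner_neg_neg,
          real_inner_self_eq_norm_mul_norm]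
        field_simp
      have h6 : |⟪g₀ - gradient U (q t), uvec⟫| ≤ ε/4 := by
        calc |⟪g₀ - gradient U (q t), uvec⟫| ≤ ‖g₀ - gradient U (q t)‖ * ‖uvec‖ :=
            abs_real_inner_le_norm _ _
          _ = ‖gradient U (q t) - g₀‖ := by rw [huvecnorm, mul_one, norm_sub_rev]
          _ ≤ ε/4 := hgradclose.le
      have h7 : |⟪F (q t) (q' t), uvec⟫| ≤ ε/4 := by
        calc |⟪F (q t) (q' t), uvec⟫| ≤ ‖F (q t) (q' t)‖ * ‖uvec‖ :=
            abs_real_inner_le_norm _ _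
          _ = ‖F (q t) (q' t)‖ := by rw [huvecnorm, mul_one]
          _ ≤ ε/4 := hFsmall.le
      rw [hexp, h5]
      have h6' := abs_le.mp h6
      have h7' := abs_le.mp h7
      linarith [h6'.1, h7'.1]
    have hφderiv : ∀ t : ℝ, 0 ≤ t → HasDerivWithinAt
        (fun s => (ε/2) * s - ⟪q' s, uvec⟫) (ε/2 - ⟪q'' t, uvec⟫) (Set.Ici 0) t := by
      intro t ht
      have h2 : HasDerivAt (fun s : ℝ => (ε/2) * s) (ε/2) t := by
        simpa using (hasDerivAt_id t).const_mul (ε/2)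
      have h3 : HasDerivWithinAt (fun s => (⟪q' s, uvec⟫ : ℝ)) (⟪q'' t, uvec⟫)
          (Set.Ici 0) t := by
        have := (hq' t ht).inner ℝ (hasDerivWithinAt_const t (Set.Ici 0) uvec)
        simpa using this
      exact h2.hasDerivWithinAt.sub h3
    have hanti := aux_antitoneOn (convex_Icc t₀ (t₀ + τ))
      (fun x hx => le_trans ht₀0 hx.1) hφderiv ?_
    · have h9 := hanti (Set.left_mem_Icc.2 (by linarith)) (Set.right_mem_Icc.2 (by linarith))
        (by linarith)
      simp only at h9
      have hb1 : |(⟪q' t₀, uvec⟫ : ℝ)| ≤ ε * τ / 8 := by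
        calc |(⟪q' t₀, uvec⟫ : ℝ)| ≤ ‖q' t₀‖ * ‖uvec‖ := abs_real_inner_le_norm _ _
          _ = ‖q' t₀‖ := by rw [huvecnorm, mul_one]
          _ ≤ ε * τ / 8 := le_of_lt (lt_of_lt_of_le (hq'small t₀ ht₀T) (min_le_right _ _))
      have hb2 : |(⟪q' (t₀ + τ), uvec⟫ : ℝ)| ≤ ε * τ / 8 := by
        calc |(⟪q' (t₀ + τ), uvec⟫ : ℝ)| ≤ ‖q' (t₀ + τ)‖ * ‖uvec‖ :=
            abs_real_inner_le_norm _ _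
          _ = ‖q' (t₀ + τ)‖ := by rw [huvecnorm, mul_one]
          _ ≤ ε * τ / 8 := le_of_lt (lt_of_lt_of_le (hq'small (t₀ + τ) (by linarith))
              (min_le_right _ _))
      have hb1' := abs_le.mp hb1
      have hb2' := abs_le.mp hb2
      nlinarith
    · intro t ht
      rw [interior_Icc] at ht
      have := hkey t (Set.Ioo_subset_Icc_self ht)
      linarith
  -- Claim C : q tends to qmin
  have hqlim : Tendsto q atTop (𝓝 qmin) := by
    rw [Metric.tendsto_atTop]
    by_contra hcon
    push_neg at hcon
    obtain ⟨ε, hε, hfreq⟩ := hcon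
    choose u hu1 hu2 using fun N : ℕ => hfreq (max (N : ℝ) 0)
    have hunn : ∀ m : ℕ, (0:ℝ) ≤ u m := fun m => le_trans (le_max_right _ 0) (hu1 m)
    have hmem : ∀ m : ℕ, q (u m) ∈ Prod.fst '' K := fun m => hmemK1 _ (hunn m)
    obtain ⟨p, hpK, φ, hφmono, hφtend⟩ := hK1.tendsto_subseq hmem
    have hucomp : Tendsto (fun k => u (φ k)) atTop atTop := by
      apply tendsto_atTop_mono (fun k : ℕ => ?_)
      · exact tendsto_natCast_atTop_atTop
      · calc ((k:ℝ)) ≤ (φ k : ℝ) := by exact_mod_cast hφmono.id_le k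
          _ ≤ max ((φ k : ℝ)) 0 := le_max_left _ _
          _ ≤ u (φ k) := hu1 (φ k)
    have h1 : Tendsto (fun k => gradient U (q (u (φ k)))) atTop (𝓝 (gradient U p)) :=
      (hgradcont.continuousAt.tendsto).comp hφtend
    have h2 : Tendsto (fun k => gradient U (q (u (φ k)))) atTop
        (𝓝 (0 : EuclideanSpace ℝ (Fin n))) := hgrad0.comp hucomp
    have hp0 : gradient U p = 0 := tendsto_nhds_unique h1 h2
    have hpqmin : p = qmin := (hcrit p).mp hp0
    have hdist : Tendsto (fun k => dist (q (u (φ k))) qmin) atTop (𝓝 (dist p qmin)) :=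
      (Continuous.dist continuous_id continuous_const).continuousAt.tendsto.comp hφtend
    have hge : ε ≤ dist p qmin := by
      apply ge_of_tendsto hdist
      filter_upwards with k
      exact hu2 (φ k)
    rw [hpqmin, dist_self] at hge
    linarith
  exact hqlim.prodMk_nhds hq'0
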